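/- For a bounded function f on a compact interval I and any subinterval Z of I with supremum sup_Z f and infimum inf_Z f, the variation of the function 1_Z · f (the product of f with the indicator of Z) satisfies Var(1_Z · f) ≤ Var_Z(f) + 2 · sup_Z |f|. -/

import Mathlib

/-- Variation of `1_Z · f` is at most the variation of `f` on `Z` plus twice the sup of `|f|` on
`Z`, for `f` bounded on a compact interval `[a,b]` and `Z ⊆ [a,b]` a subinterval. -/
theorem stmt0 (a b : ℝ) (f : ℝ → ℝ) (Z : Set ℝ) (hZint : Z.OrdConnected)
    (hZ : Z ⊆ Set.Icc a b) (hbd : ∃ M : ℝ, ∀ x ∈ Set.Icc a b, |f x| ≤ M) :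
    eVariationOn (Z.indicator f) (Set.Icc a b) ≤
      eVariationOn f Z + ENNReal.ofReal (2 * ⨆ x : Z, |f x.1|) := by
  classical
  obtain ⟨M0, hM0⟩ := hbd
  set M : ℝ := ⨆ x : Z, |f x.1| with hM
  have hbdd : BddAbove (Set.range fun x : Z => |f x.1|) :=
    ⟨M0, by rintro _ ⟨x, rfl⟩; exact hM0 _ (hZ x.2)⟩
  have hle : ∀ x ∈ Z, |f x| ≤ M := fun x hx => le_ciSup hbdd (⟨x, hx⟩ : Z)
  rw [eVariationOn]
  refine iSup_le ?_
  rintro ⟨n, u, hu, us⟩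
  dsimp only
  by_cases hT : ∃ i ≤ n, u i ∈ Z
  · -- set of indices landing in Z
    set T : Finset ℕ := (Finset.range (n + 1)).filter (fun i => u i ∈ Z) with hTdef
    have hTne : T.Nonempty := by
      obtain ⟨i, hin, hiZ⟩ := hT
      exact ⟨i, by simp [hTdef, Nat.lt_succ_of_le hin, hiZ]⟩
    set p := T.min' hTne with hp
    set q := T.max' hTne with hq
    have hpT : p ∈ T := T.min'_mem hTne
    have hqT : q ∈ T := T.max'_mem hTne
    have hpZ : u p ∈ Z := (Finset.mem_filter.mp hpT).2
    have hqZ : u q ∈ Z := (Finset.mem_filter.mp hqT).2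
    have hpn : p ≤ n := Nat.lt_succ_iff.mp (Finset.mem_range.mp (Finset.mem_filter.mp hpT).1)
    have hqn : q ≤ n := Nat.lt_succ_iff.mp (Finset.mem_range.mp (Finset.mem_filter.mp hqT).1)
    have hmemT : ∀ i ≤ n, u i ∈ Z → i ∈ T := fun i hin hiZ => by
      simp [hTdef, Nat.lt_succ_of_le hin, hiZ]
    -- all of [p, q] lands in Z
    have hmem : ∀ i, p ≤ i → i ≤ q → u i ∈ Z := fun i h1 h2 =>
      hZint.out hpZ hqZ ⟨hu h1, hu h2⟩
    have hM0' : 0 ≤ M := le_trans (abs_nonneg _) (hle _ hpZ)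
    -- interior and boundary index sets
    set A : Finset ℕ := (Finset.range n).filter (fun i => u i ∈ Z ∧ u (i + 1) ∈ Z) with hA
    set B : Finset ℕ := (Finset.range n).filter
      (fun i => ¬(u i ∈ Z ∧ u (i + 1) ∈ Z) ∧ (u i ∈ Z ∨ u (i + 1) ∈ Z)) with hB
    have hsplit := Finset.sum_filter_add_sum_filter_not (Finset.range n)
      (fun i => u i ∈ Z ∧ u (i + 1) ∈ Z)
      (fun i => edist (Z.indicator f (u (i + 1))) (Z.indicator f (u i)))
    rw [← hsplit]
    gcongr
    · -- interior terms
      have hAsum : ∑ i ∈ A, edist (Z.indicator f (u (i + 1))) (Z.indicator f (u i))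
          = ∑ i ∈ A, edist (f (u (i + 1))) (f (u i)) := by
        refine Finset.sum_congr rfl fun i hi => ?_
        obtain ⟨-, h1, h2⟩ := Finset.mem_filter.mp hi
        rw [Set.indicator_of_mem h1, Set.indicator_of_mem h2]
      rw [hA] at hAsum
      rw [hAsum]
      rw [← hA]
      have hAsub : A ⊆ Finset.Ico p q := by
        intro i hi
        obtain ⟨hiR, h1, h2⟩ := Finset.mem_filter.mp hi
        have hin := Finset.mem_range.mp hiR
        have h1T := hmemT i hin.le h1
        have h2T := hmemT (i + 1) hin h2
        exact Finset.mem_Ico.mpr ⟨T.min'_le _ h1T, Nat.lt_of_succ_le (T.le_max' _ h2T)⟩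
      calc ∑ i ∈ A, edist (f (u (i + 1))) (f (u i))
          ≤ ∑ i ∈ Finset.Ico p q, edist (f (u (i + 1))) (f (u i)) :=
            Finset.sum_le_sum_of_subset hAsub
        _ ≤ eVariationOn f Z :=
            eVariationOn.sum_le_of_monotoneOn_Icc (f := f) (hu.monotoneOn _)
              (fun i hi => hmem i hi.1 hi.2)
    · -- boundary terms
      have hzero : ∀ i ∈ (Finset.range n).filter (fun i => ¬(u i ∈ Z ∧ u (i + 1) ∈ Z)),
          i ∉ B → edist (Z.indicator f (u (i + 1))) (Z.indicator f (u i)) = 0 := by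
        intro i hi hiB
        obtain ⟨hiR, hnot⟩ := Finset.mem_filter.mp hi
        have h1 : u i ∉ Z := by
          by_contra h1
          exact hiB (Finset.mem_filter.mpr ⟨hiR, hnot, Or.inl h1⟩)
        have h2 : u (i + 1) ∉ Z := by
          by_contra h2
          exact hiB (Finset.mem_filter.mpr ⟨hiR, hnot, Or.inr h2⟩)
        rw [Set.indicator_of_notMem h1, Set.indicator_of_notMem h2, edist_self]
      have hBsub : B ⊆ (Finset.range n).filter (fun i => ¬(u i ∈ Z ∧ u (i + 1) ∈ Z)) := by
        intro i hi
        obtain ⟨hiR, hnot, -⟩ := Finset.mem_filter.mp hi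
        exact Finset.mem_filter.mpr ⟨hiR, hnot⟩
      rw [← Finset.sum_subset hBsub hzero]
      -- each boundary term is ≤ ofReal M
      have hBbd : ∀ i ∈ B, edist (Z.indicator f (u (i + 1))) (Z.indicator f (u i))
          ≤ ENNReal.ofReal M := by
        intro i hi
        obtain ⟨hiR, hnot, hor⟩ := Finset.mem_filter.mp hi
        rcases Classical.em (u i ∈ Z) with h1 | h1
        · have h2 : u (i + 1) ∉ Z := fun h2 => hnot ⟨h1, h2⟩
          rw [Set.indicator_of_mem h1, Set.indicator_of_notMem h2, edist_comm, edist_dist,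
            Real.dist_eq]
          simpa using ENNReal.ofReal_le_ofReal (hle _ h1)
        · have h2 : u (i + 1) ∈ Z := hor.resolve_left h1
          rw [Set.indicator_of_mem h2, Set.indicator_of_notMem h1, edist_dist, Real.dist_eq]
          simpa using ENNReal.ofReal_le_ofReal (hle _ h2)
      -- B has at most 2 elements
      have hBcard : B ⊆ {q, p - 1} := by
        intro i hi
        obtain ⟨hiR, hnot, hor⟩ := Finset.mem_filter.mp hi
        have hin := Finset.mem_range.mp hiR
        rcases Classical.em (u i ∈ Z) with h1 | h1
        · have h2 : u (i + 1) ∉ Z := fun h2 => hnot ⟨h1, h2⟩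
          have hiT := hmemT i hin.le h1
          have hiq : i ≤ q := T.le_max' _ hiT
          have hieq : i = q := by
            rcases eq_or_lt_of_le hiq with h | h
            · exact h
            · exact absurd (hmem (i + 1) ((T.min'_le _ hiT).trans i.le_succ) h) h2
          simp [hieq]
        · have h2 : u (i + 1) ∈ Z := hor.resolve_left h1
          have h2T := hmemT (i + 1) hin h2
          have hpi : p ≤ i + 1 := T.min'_le _ h2T
          have hieq : i + 1 = p := by
            rcases eq_or_lt_of_le hpi with h | h
            · exact h.symm
            · exact absurd (hmem i (Nat.lt_succ_iff.mp h) ((i.le_succ).trans (T.le_max' _ h2T)))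
                h1
          have : i = p - 1 := by omega
          simp [this]
      calc ∑ i ∈ B, edist (Z.indicator f (u (i + 1))) (Z.indicator f (u i))
          ≤ ∑ _i ∈ B, ENNReal.ofReal M := Finset.sum_le_sum hBbd
        _ = B.card • ENNReal.ofReal M := by rw [Finset.sum_const]
        _ ≤ 2 • ENNReal.ofReal M := by
            refine nsmul_le_nsmul_left (by positivity) ?_
            calc B.card ≤ ({q, p - 1} : Finset ℕ).card := Finset.card_le_card hBcard
              _ ≤ 2 := Finset.card_insert_le _ _ |>.trans (by simp)
        _ = ENNReal.ofReal (2 * M) := by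
            rw [two_nsmul, ← ENNReal.ofReal_add hM0' hM0', two_mul]
  · -- no index lands in Z : every term vanishes
    push_neg at hT
    have : ∀ i ∈ Finset.range n,
        edist (Z.indicator f (u (i + 1))) (Z.indicator f (u i)) = 0 := by
      intro i hi
      have hin := Finset.mem_range.mp hi
      rw [Set.indicator_of_notMem (hT i hin.le), Set.indicator_of_notMem (hT (i + 1) hin),
        edist_self]
    rw [Finset.sum_congr rfl this]
    simp
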